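/- arXiv:2301.03586 — 3 statements merged into one kernel-verified Lean document; each statement's English description precedes it below -/
import Mathlib

section
/- For any positive natural number m, there exists a positive natural number N such that p_{n+1}^m < ∏_{i=1}^{n} p_i for all n ≥ N. -/
open Filter Real Finset

/-- The n-th prime number, 1-indexed: `p 1 = 2`, `p 2 = 3`, ... -/
noncomputable def p (n : ℕ) : ℕ := Nat.nth Nat.Prime (n - 1)

/-- The n-th primorial: `primor n = ∏_{i=1}^n p i`. -/
noncomputable def primor (n : ℕ) : ℕ := ∏ i ∈ Finset.Icc 1 n, p i

lemma nth_prime_le_two_pow (k : ℕ) : Nat.nth Nat.Prime k ≤ 2 ^ (k + 1) := by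
  induction k with
  | zero => simp [Nat.nth_prime_zero_eq_two]
  | succ k ih =>
    have hpos : Nat.nth Nat.Prime k ≠ 0 := (Nat.prime_nth_prime k).pos.ne'
    obtain ⟨q, hq, hlt, hle⟩ := Nat.exists_prime_lt_and_le_two_mul _ hpos
    have hnth : Nat.nth Nat.Prime (k + 1) ≤ q := by
      by_contra h
      push_neg at h
      have := Nat.le_nth_of_lt_nth_succ h hq
      omega
    calc Nat.nth Nat.Prime (k + 1) ≤ 2 * Nat.nth Nat.Prime k := hnth.trans hle
      _ ≤ 2 * 2 ^ (k + 1) := by omega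
      _ = 2 ^ (k + 2) := by ring

lemma factorial_le_primor (n : ℕ) : Nat.factorial (n + 1) ≤ primor n := by
  induction n with
  | zero => simp [primor]
  | succ n ih =>
    have hp : n + 2 ≤ p (n + 1) := by
      simpa [p] using Nat.add_two_le_nth_prime n
    have : primor (n + 1) = primor n * p (n + 1) := by
      rw [primor, primor, Finset.prod_Icc_succ_top (by omega)]
    rw [this, Nat.factorial_succ]
    calc (n + 2) * Nat.factorial (n + 1) ≤ (n + 2) * primor n := Nat.mul_le_mul_left _ ih
      _ = primor n * (n + 2) := Nat.mul_comm _ _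
      _ ≤ primor n * p (n + 1) := Nat.mul_le_mul_left _ hp

theorem stmt_2 (m : ℕ) (hm : 1 ≤ m) :
    ∃ N : ℕ, 1 ≤ N ∧ ∀ n : ℕ, N ≤ n → p (n + 1) ^ m < primor n := by
  obtain ⟨n0, hn0, h⟩ : ∃ n0 > 1, ∀ n ≥ n0, (2 ^ m) ^ n < Nat.factorial (n - 1) := by
    obtain ⟨n1, hn1⟩ := Filter.eventually_atTop.1 (Nat.eventually_pow_lt_factorial_sub (2 ^ m) 1)
    exact ⟨max n1 2, by omega, fun n hn => hn1 n (le_of_max_le_left hn)⟩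
  refine ⟨n0, by omega, fun n hn => ?_⟩
  have h1 : p (n + 1) ^ m ≤ (2 ^ m) ^ (n + 2) := by
    calc p (n + 1) ^ m ≤ (2 ^ (n + 1)) ^ m :=
          Nat.pow_le_pow_left (by simpa [p] using nth_prime_le_two_pow n) m
      _ = (2 ^ m) ^ (n + 1) := by rw [← pow_mul, ← pow_mul, Nat.mul_comm]
      _ ≤ (2 ^ m) ^ (n + 2) := Nat.pow_le_pow_right Nat.one_le_two_pow (by omega)
  have h2 : (2 ^ m) ^ (n + 2) < Nat.factorial (n + 1) := by
    have := h (n + 2) (by omega)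
    simpa using this
  exact (h1.trans_lt h2).trans_le (factorial_le_primor n)
end

section
/- For x ≥ 2, let n'(x) be the index with #(n'(x)) ≤ x < #(n'(x)+1), where #(n) is the n-th primorial, and define log₋(x) = log(#(n'(x)−1)) and log₊(x) = log(#(n'(x)+1)). Then lim_{x→∞} log₋(x)/log₊(x) = 1. -/
open Filter Real Finset

lemma p_prime (n : ℕ) : Nat.Prime (p n) := Nat.prime_nth_prime _

lemma p_ge (n : ℕ) : n + 1 ≤ p n ∨ n = 0 := by
  rcases Nat.eq_zero_or_pos n with h | h
  · exact Or.inr h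
  · left
    have := Nat.add_two_le_nth_prime (n - 1)
    unfold p
    omega

/-- next prime bound -/
lemma nth_prime_succ_le {n q : ℕ} (hq : Nat.Prime q) (h : Nat.nth Nat.Prime n < q) :
    Nat.nth Nat.Prime (n + 1) ≤ q := by
  have h1 : Nat.nth Nat.Prime (Nat.count Nat.Prime q) = q := Nat.nth_count hq
  have h2 : n < Nat.count Nat.Prime q := by
    by_contra hc
    push_neg at hc
    have h3 := (Nat.nth_le_nth Nat.infinite_setOf_prime).2 hc
    rw [h1] at h3
    exact absurd h (not_lt.2 h3)
  calc Nat.nth Nat.Prime (n + 1) ≤ Nat.nth Nat.Prime (Nat.count Nat.Prime q) :=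
        (Nat.nth_le_nth Nat.infinite_setOf_prime).2 h2
    _ = q := h1

lemma nth_prime_le_pow (n : ℕ) : Nat.nth Nat.Prime n ≤ 2 ^ (n + 1) := by
  induction n with
  | zero => simp [Nat.nth_prime_zero_eq_two]
  | succ n ih =>
    obtain ⟨q, hq, hlt, hle⟩ := Nat.exists_prime_lt_and_le_two_mul (Nat.nth Nat.Prime n)
      (Nat.prime_nth_prime n).pos.ne'
    calc Nat.nth Nat.Prime (n + 1) ≤ q := nth_prime_succ_le hq hlt
      _ ≤ 2 * Nat.nth Nat.Prime n := hle
      _ ≤ 2 * 2 ^ (n + 1) := by omega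
      _ = 2 ^ (n + 2) := by ring

lemma p_le_pow {n : ℕ} (hn : 1 ≤ n) : p n ≤ 2 ^ n := by
  unfold p
  have h := nth_prime_le_pow (n - 1)
  have hn1 : n - 1 + 1 = n := by omega
  rwa [hn1] at h

lemma primor_pos (n : ℕ) : 0 < primor n :=
  Finset.prod_pos fun i _ => (p_prime i).pos

lemma primor_mono : Monotone primor := by
  intro a b hab
  exact Finset.prod_le_prod_of_subset_of_one_le'
    (Finset.Icc_subset_Icc le_rfl hab) (fun i _ _ => (p_prime i).one_lt.le)

lemma primor_succ (n : ℕ) : primor (n + 1) = primor n * p (n + 1) := by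
  unfold primor
  exact Finset.prod_Icc_succ_top (by omega) _

lemma two_le_primor {n : ℕ} (hn : 1 ≤ n) : 2 ≤ primor n := by
  calc 2 ≤ primor 1 := by
        simp only [primor, Finset.Icc_self, Finset.prod_singleton]
        exact (p_prime 1).two_le
    _ ≤ primor n := primor_mono hn

/-- lower bound: primor (n-1) ≥ (n/2)^(n/2) for n ≥ 4 -/
lemma primor_lower (n : ℕ) (hn : 4 ≤ n) : (n / 2) ^ (n / 2) ≤ primor (n - 1) := by
  set m := n / 2 with hm
  have hm2 : 2 ≤ m := by omega
  have h1 : ∀ i ∈ Finset.Icc m (n - 1), m ≤ p i := by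
    intro i hi
    simp only [Finset.mem_Icc] at hi
    rcases p_ge i with h | h
    · omega
    · omega
  have h2 : m ^ (Finset.Icc m (n - 1)).card ≤ ∏ i ∈ Finset.Icc m (n - 1), p i :=
    Finset.pow_card_le_prod _ _ _ h1
  have hcard : (Finset.Icc m (n - 1)).card = n - m := by
    rw [Nat.card_Icc]; omega
  have h3 : ∏ i ∈ Finset.Icc m (n - 1), p i ≤ primor (n - 1) := by
    unfold primor
    exact Finset.prod_le_prod_of_subset_of_one_le'
      (Finset.Icc_subset_Icc (by omega) le_rfl) (fun i _ _ => (p_prime i).one_lt.le)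
  calc m ^ m ≤ m ^ (n - m) := Nat.pow_le_pow_right (by omega) (by omega)
    _ = m ^ (Finset.Icc m (n - 1)).card := by rw [hcard]
    _ ≤ ∏ i ∈ Finset.Icc m (n - 1), p i := h2
    _ ≤ primor (n - 1) := h3

lemma seq_tendsto :
    Tendsto (fun n : ℕ => Real.log (primor (n - 1)) / Real.log (primor (n + 1)))
      atTop (nhds 1) := by
  have hdiv : Tendsto (fun n : ℕ => n / 2) atTop atTop :=
    tendsto_atTop_atTop.2 fun b => ⟨2 * b, fun n hn => by omega⟩
  have hlog : Tendsto (fun n : ℕ => Real.log ((n / 2 : ℕ) : ℝ)) atTop atTop :=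
    Real.tendsto_log_atTop.comp (tendsto_natCast_atTop_atTop.comp hdiv)
  have h0 : Tendsto (fun n : ℕ => 6 * Real.log 2 / Real.log ((n / 2 : ℕ) : ℝ))
      atTop (nhds 0) := Tendsto.div_atTop tendsto_const_nhds hlog
  have hg : Tendsto (fun n : ℕ => 1 - 6 * Real.log 2 / Real.log ((n / 2 : ℕ) : ℝ))
      atTop (nhds 1) := by
    have h1 : Tendsto (fun _ : ℕ => (1 : ℝ)) atTop (nhds 1) := tendsto_const_nhds
    have := h1.sub h0
    simpa using this
  refine tendsto_of_tendsto_of_tendsto_of_le_of_le' hg tendsto_const_nhds ?_ ?_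
  · -- lower bound eventually
    filter_upwards [eventually_ge_atTop 4] with n hn
    set m := n / 2 with hm
    have hm2 : 2 ≤ m := by omega
    have hmR : (2 : ℝ) ≤ (m : ℝ) := by exact_mod_cast hm2
    set A := Real.log (primor (n - 1)) with hA
    set B := Real.log (primor (n + 1)) with hB
    have h2A : (2 : ℝ) ≤ (primor (n - 1) : ℝ) := by exact_mod_cast two_le_primor (by omega)
    have hApos : 0 < A := Real.log_pos (by linarith)
    have hAB : A ≤ B := by
      apply Real.log_le_log (by exact_mod_cast primor_pos _)
      exact_mod_cast primor_mono (by omega)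
    have hBpos : 0 < B := lt_of_lt_of_le hApos hAB
    have hlogm : 0 < Real.log m := Real.log_pos (by linarith)
    have hmlogpos : 0 < (m : ℝ) * Real.log m := mul_pos (by linarith) hlogm
    -- A ≥ m log m
    have hAlow : (m : ℝ) * Real.log m ≤ A := by
      have h1 : ((m : ℝ)) ^ m ≤ ((primor (n - 1) : ℕ) : ℝ) := by
        exact_mod_cast primor_lower n hn
      have := Real.log_le_log (pow_pos (by linarith) m) h1
      rwa [Real.log_pow] at this
    -- B - A ≤ 2 (n+1) log 2
    have hBA : B - A ≤ 2 * ((n : ℝ) + 1) * Real.log 2 := by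
      have h1 : n - 1 + 1 = n := by omega
      have hid := primor_succ n
      have h2 := primor_succ (n - 1)
      rw [h1] at h2
      have hcast : (primor (n + 1) : ℝ) = (primor (n - 1) : ℝ) * ((p n : ℝ) * (p (n + 1) : ℝ)) := by
        rw [hid, h2]; push_cast; ring
      have hppos : (0 : ℝ) < (p n : ℝ) * (p (n + 1) : ℝ) :=
        mul_pos (by exact_mod_cast (p_prime n).pos) (by exact_mod_cast (p_prime (n + 1)).pos)
      have hBeq : B = A + Real.log ((p n : ℝ) * (p (n + 1) : ℝ)) := by
        rw [hB, hA, hcast, Real.log_mul (by exact_mod_cast (primor_pos _).ne') hppos.ne']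
      have hp1 : (p n : ℝ) ≤ 2 ^ (n + 1) := by
        have h2 : (p n : ℝ) ≤ (2 : ℝ) ^ n := by exact_mod_cast p_le_pow (by omega : 1 ≤ n)
        calc (p n : ℝ) ≤ (2 : ℝ) ^ n := h2
          _ ≤ (2 : ℝ) ^ (n + 1) := by apply pow_le_pow_right₀ one_le_two; omega
      have hp2 : (p (n + 1) : ℝ) ≤ 2 ^ (n + 1) := by
        exact_mod_cast p_le_pow (by omega : 1 ≤ n + 1)
      have hle : (p n : ℝ) * (p (n + 1) : ℝ) ≤ (2 ^ (n + 1)) * (2 ^ (n + 1)) :=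
        mul_le_mul hp1 hp2 (by positivity) (by positivity)
      have hlogle := Real.log_le_log hppos hle
      have hrw : Real.log ((2 : ℝ) ^ (n + 1) * 2 ^ (n + 1)) = 2 * ((n : ℝ) + 1) * Real.log 2 := by
        rw [Real.log_mul (by positivity) (by positivity), Real.log_pow]
        push_cast; ring
      rw [hrw] at hlogle
      rw [hBeq]
      linarith
    have hBAnonneg : 0 ≤ B - A := by linarith
    have hlog2pos : 0 < Real.log 2 := Real.log_pos one_lt_two
    have hnum : B - A ≤ 6 * (m : ℝ) * Real.log 2 := by
      have hnm : 2 * ((n : ℝ) + 1) ≤ 6 * (m : ℝ) := by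
        have : 2 * (n + 1) ≤ 6 * m := by omega
        exact_mod_cast this
      nlinarith
    have hfrac : (B - A) / A ≤ 6 * Real.log 2 / Real.log m := by
      have step : (B - A) / A ≤ (6 * (m : ℝ) * Real.log 2) / ((m : ℝ) * Real.log m) :=
        div_le_div₀ (by positivity) hnum hmlogpos hAlow
      have e : (6 * (m : ℝ) * Real.log 2) / ((m : ℝ) * Real.log m)
          = 6 * Real.log 2 / Real.log m := by
        have hm0 : (m : ℝ) ≠ 0 := by linarith
        have hlm0 : Real.log m ≠ 0 := hlogm.ne'
        field_simp
      rwa [e] at step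
    -- A/B ≥ 1 - (B-A)/A
    have e1 : A / B = 1 - (B - A) / B := by field_simp; ring
    have e2 : (B - A) / B ≤ (B - A) / A := div_le_div_of_nonneg_left hBAnonneg hApos hAB
    rw [e1]
    linarith
  · filter_upwards [eventually_ge_atTop 4] with n hn
    apply div_le_one_of_le₀
    · apply Real.log_le_log (by exact_mod_cast primor_pos _)
      exact_mod_cast primor_mono (by omega)
    · exact Real.log_nonneg (by exact_mod_cast Nat.one_le_iff_ne_zero.2 (primor_pos _).ne')

theorem stmt_11 (n' : ℝ → ℕ)
    (hn' : ∀ x : ℝ, 2 ≤ x → ((primor (n' x) : ℝ) ≤ x ∧ x < (primor (n' x + 1) : ℝ))) :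
    Tendsto (fun x : ℝ => Real.log (primor (n' x - 1)) / Real.log (primor (n' x + 1)))
      atTop (nhds 1) := by
  have htop : Tendsto n' atTop atTop := by
    rw [tendsto_atTop]
    intro b
    filter_upwards [eventually_ge_atTop (max 2 (primor (b + 1) : ℝ))] with x hx
    have hx2 : (2 : ℝ) ≤ x := le_trans (le_max_left _ _) hx
    obtain ⟨h1, h2⟩ := hn' x hx2
    by_contra hc
    push_neg at hc
    have hmono : primor (n' x + 1) ≤ primor (b + 1) := primor_mono (by omega)
    have h3 : (primor (n' x + 1) : ℝ) ≤ (primor (b + 1) : ℝ) := by exact_mod_cast hmono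
    have hxb : (primor (b + 1) : ℝ) ≤ x := le_trans (le_max_right _ _) hx
    linarith
  exact seq_tendsto.comp htop
end

section
/- For x ≥ 2, write x = #(n'(x)) · s'(x) with s'(x) = 1 + (p_{n'(x)+1} − 1) r'(x) and r'(x) = (x − #(n'(x)))/(#(n'(x)+1) − #(n'(x))), and define tot₊(x) = (1 + (p_{n'(x)+1} − 2) r'(x)) · ∏_{i=1}^{n'(x)} (p_i − 1). Then x/tot₊(x) is asymptotically equivalent to ∏_{i=1}^{n'(x)} p_i/(p_i − 1), i.e., lim_{x→∞} (x/tot₊(x)) / ∏_{i=1}^{n'(x)} (p_i/(p_i−1)) = 1. -/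
open Filter Real Finset

lemma p_prime_s14 (i : ℕ) : (p i).Prime := Nat.prime_nth_prime _

lemma two_le_p (i : ℕ) : 2 ≤ p i := (p_prime_s14 i).two_le

lemma one_le_primor (n : ℕ) : 1 ≤ primor n := primor_pos n

lemma le_p_succ (n : ℕ) : n ≤ p (n + 1) := by
  have : n ≤ Nat.nth Nat.Prime n :=
    (Nat.nth_strictMono Nat.infinite_setOf_prime).le_apply
  simpa [p] using this

lemma key (x : ℝ) (n : ℕ) (h1 : (primor n : ℝ) ≤ x) (h2 : x < primor (n + 1)) :
    1 ≤ (x / ((1 + ((p (n + 1) : ℝ) - 2) *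
            ((x - (primor n : ℝ)) / ((primor (n + 1) : ℝ) - (primor n : ℝ)))) *
          ∏ i ∈ Finset.Icc 1 n, ((p i : ℝ) - 1))) /
        (∏ i ∈ Finset.Icc 1 n, ((p i : ℝ) / ((p i : ℝ) - 1))) ∧
    (x / ((1 + ((p (n + 1) : ℝ) - 2) *
            ((x - (primor n : ℝ)) / ((primor (n + 1) : ℝ) - (primor n : ℝ)))) *
          ∏ i ∈ Finset.Icc 1 n, ((p i : ℝ) - 1))) /
        (∏ i ∈ Finset.Icc 1 n, ((p i : ℝ) / ((p i : ℝ) - 1)))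
      ≤ 1 + 1 / ((p (n + 1) : ℝ) - 1) := by
  set a : ℝ := (p (n + 1) : ℝ) with ha
  set P : ℝ := (primor n : ℝ) with hP
  have ha2 : (2 : ℝ) ≤ a := by rw [ha]; exact_mod_cast two_le_p (n + 1)
  have hP1 : (1 : ℝ) ≤ P := by rw [hP]; exact_mod_cast one_le_primor n
  have hQ : (primor (n + 1) : ℝ) = P * a := by
    rw [primor_succ]; push_cast; ring
  set r : ℝ := (x - P) / ((primor (n + 1) : ℝ) - P) with hr
  have hden : (primor (n + 1) : ℝ) - P = P * (a - 1) := by rw [hQ]; ring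
  have hdenpos : (0 : ℝ) < P * (a - 1) := by nlinarith
  have hr0 : 0 ≤ r := div_nonneg (by linarith) (by rw [hden]; linarith)
  have hr1 : r ≤ 1 := by
    rw [hr, div_le_one (by rw [hden]; exact hdenpos)]
    linarith [h2, hden]
  have hx : x = P * (1 + (a - 1) * r) := by
    have : r * (P * (a - 1)) = x - P := by
      rw [hr, hden, div_mul_cancel₀]; exact ne_of_gt hdenpos
    nlinarith [this]
  -- product facts
  have hT : ∀ i ∈ Finset.Icc 1 n, (0 : ℝ) < (p i : ℝ) - 1 := by
    intro i _
    have := two_le_p i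
    have : (2 : ℝ) ≤ (p i : ℝ) := by exact_mod_cast this
    linarith
  have hTpos : (0 : ℝ) < ∏ i ∈ Finset.Icc 1 n, ((p i : ℝ) - 1) :=
    Finset.prod_pos hT
  have hprod : (∏ i ∈ Finset.Icc 1 n, ((p i : ℝ) / ((p i : ℝ) - 1)))
      = P / ∏ i ∈ Finset.Icc 1 n, ((p i : ℝ) - 1) := by
    rw [Finset.prod_div_distrib, hP]
    unfold primor
    push_cast
    rfl
  set T : ℝ := ∏ i ∈ Finset.Icc 1 n, ((p i : ℝ) - 1) with hTdef
  set D : ℝ := 1 + (a - 2) * r with hD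
  have hDpos : (0 : ℝ) < D := by nlinarith
  have hE : (x / (D * T)) / (P / T) = x / (D * P) := by
    field_simp
  rw [hprod, hE]
  have hDP : (0 : ℝ) < D * P := by positivity
  constructor
  · rw [le_div_iff₀ hDP]
    rw [hx]
    nlinarith
  · rw [div_le_iff₀ hDP, hx]
    have ha1 : (0 : ℝ) < a - 1 := by linarith
    rw [show (1 : ℝ) + 1 / (a - 1) = a / (a - 1) by field_simp; ring,
      div_mul_eq_mul_div, le_div_iff₀ ha1]
    have hDexp : D = 1 + (a - 2) * r := hD
    nlinarith [mul_nonneg (by linarith : (0:ℝ) ≤ 1 - r) (by linarith : (0:ℝ) ≤ P)]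

lemma tendsto_n' (n' : ℝ → ℕ)
    (hn' : ∀ x : ℝ, 2 ≤ x → ((primor (n' x) : ℝ) ≤ x ∧ x < (primor (n' x + 1) : ℝ))) :
    Tendsto n' atTop atTop := by
  rw [tendsto_atTop]
  intro N
  filter_upwards [eventually_ge_atTop (max 2 (primor (N + 1) : ℝ))] with x hx
  have hx2 : (2 : ℝ) ≤ x := le_trans (le_max_left _ _) hx
  have h := (hn' x hx2).2
  by_contra hc
  push_neg at hc
  have : n' x + 1 ≤ N + 1 := by omega
  have hm : (primor (n' x + 1) : ℝ) ≤ (primor (N + 1) : ℝ) := by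
    exact_mod_cast primor_mono this
  have : (primor (N + 1) : ℝ) ≤ x := le_trans (le_max_right _ _) hx
  linarith

theorem stmt_14 (n' : ℝ → ℕ)
    (hn' : ∀ x : ℝ, 2 ≤ x → ((primor (n' x) : ℝ) ≤ x ∧ x < (primor (n' x + 1) : ℝ))) :
    Tendsto (fun x : ℝ =>
        (x / ((1 + ((p (n' x + 1) : ℝ) - 2) *
            ((x - (primor (n' x) : ℝ)) / ((primor (n' x + 1) : ℝ) - (primor (n' x) : ℝ)))) *
          ∏ i ∈ Finset.Icc 1 (n' x), ((p i : ℝ) - 1))) /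
        (∏ i ∈ Finset.Icc 1 (n' x), ((p i : ℝ) / ((p i : ℝ) - 1))))
      atTop (nhds 1) := by
  have hp_tendsto : Tendsto (fun x : ℝ => ((p (n' x + 1) : ℝ) - 1)) atTop atTop := by
    have h1 : Tendsto (fun m : ℕ => ((p (m + 1) : ℝ) - 1)) atTop atTop := by
      rw [tendsto_atTop]
      intro b
      filter_upwards [eventually_ge_atTop ⌈b + 1⌉₊] with m hm
      have h2 : (m : ℝ) ≤ (p (m + 1) : ℝ) := by exact_mod_cast le_p_succ m
      have h3 : b + 1 ≤ (m : ℝ) :=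
        le_trans (Nat.le_ceil _) (by exact_mod_cast hm)
      linarith
    exact h1.comp (tendsto_n' n' hn')
  have hupper : Tendsto (fun x : ℝ => 1 + 1 / ((p (n' x + 1) : ℝ) - 1)) atTop (nhds 1) := by
    have := hp_tendsto.inv_tendsto_atTop
    simpa using tendsto_const_nhds.add (this.congr (fun x => (one_div _).symm))
  apply tendsto_of_tendsto_of_tendsto_of_le_of_le' (tendsto_const_nhds) hupper
  · filter_upwards [eventually_ge_atTop (2 : ℝ)] with x hx
    exact (key x (n' x) (hn' x hx).1 (hn' x hx).2).1
  · filter_upwards [eventually_ge_atTop (2 : ℝ)] with x hx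
    exact (key x (n' x) (hn' x hx).1 (hn' x hx).2).2
end
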